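/- The dual of the Boolean algebra 𝒫(2^ω) embeds into the Muchnik lattice as a Boolean algebra: there exists a map F from subsets of 2^ω to mass problems such that for all I, J ⊆ 2^ω: (i) if I ⊆ J then F(J) ≤_w F(I); (ii) if I ⊊ J then ¬(F(I) ≤_w F(J)); (iii) F(I ∩ J) ≡_w F(I) + F(J); and (iv) F(I ∪ J) ≡_w F(I) ∪ F(J). -/

import Mathlib

open Cardinal

namespace Muchnik

/-- Oracle partial recursiveness: `f` is partial recursive relative to the oracle `g`. -/
inductive RecursiveIn (g : ℕ → ℕ) : (ℕ →. ℕ) → Prop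
  | oracle : RecursiveIn g ↑g
  | zero : RecursiveIn g (pure 0)
  | succ : RecursiveIn g ↑Nat.succ
  | left : RecursiveIn g ↑fun n : ℕ => n.unpair.1
  | right : RecursiveIn g ↑fun n : ℕ => n.unpair.2
  | pair {f h} : RecursiveIn g f → RecursiveIn g h →
      RecursiveIn g fun n => Nat.pair <$> f n <*> h n
  | comp {f h} : RecursiveIn g f → RecursiveIn g h →
      RecursiveIn g fun n => h n >>= f
  | prec {f h} : RecursiveIn g f → RecursiveIn g h →
      RecursiveIn g (Nat.unpaired fun a n =>
        n.rec (f a) fun y IH => do let i ← IH; h (Nat.pair a (Nat.pair y i)))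
  | rfind {f} : RecursiveIn g f →
      RecursiveIn g fun a => Nat.rfind fun n => (fun m => m = 0) <$> f (Nat.pair a n)

/-- Turing reducibility `f ≤_T g` for elements of Baire space. -/
def TuringLe (f g : ℕ → ℕ) : Prop := RecursiveIn g ↑f

/-- Strict Turing reducibility `f <_T g`. -/
def TuringLt (f g : ℕ → ℕ) : Prop := TuringLe f g ∧ ¬ TuringLe g f

/-- Turing equivalence `f ≡_T g`. -/
def TuringEquiv (f g : ℕ → ℕ) : Prop := TuringLe f g ∧ TuringLe g f

/-- Turing incomparability `f |_T g`. -/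
def TuringIncomp (f g : ℕ → ℕ) : Prop := ¬ TuringLe f g ∧ ¬ TuringLe g f

/-- Muchnik reducibility `A ≤_w B` between mass problems. -/
def MuchnikLe (A B : Set (ℕ → ℕ)) : Prop := ∀ f ∈ B, ∃ g ∈ A, TuringLe g f

/-- Strict Muchnik reducibility `A <_w B`. -/
def MuchnikLt (A B : Set (ℕ → ℕ)) : Prop := MuchnikLe A B ∧ ¬ MuchnikLe B A

/-- Muchnik equivalence `A ≡_w B`. -/
def MuchnikEquiv (A B : Set (ℕ → ℕ)) : Prop := MuchnikLe A B ∧ MuchnikLe B A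

/-- The strict Turing upper cone `C'(f) = {g : f <_T g}`. -/
def cone (f : ℕ → ℕ) : Set (ℕ → ℕ) := {g | TuringLt f g}

/-- The recursive join `f ⊕ g`: `(f ⊕ g)(2x) = f(x)` and `(f ⊕ g)(2x+1) = g(x)`. -/
def join (f g : ℕ → ℕ) : ℕ → ℕ := fun n => if n % 2 = 0 then f (n / 2) else g (n / 2)

/-- The join `A + B` of mass problems. -/
def joinSet (A B : Set (ℕ → ℕ)) : Set (ℕ → ℕ) := {h | ∃ f ∈ A, ∃ g ∈ B, h = join f g}

/-- Identification of `2^ω` with a subset of Baire space. -/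
def ofBool (X : ℕ → Bool) : ℕ → ℕ := fun n => if X n then 1 else 0


section Antichain

inductive Cd : Type
  | oracle | zero | succ | left | right
  | pair (a b : Cd) | comp (a b : Cd) | prec (a b : Cd) | rfind (a : Cd)

def Cd.eval (g : ℕ → ℕ) : Cd → ℕ →. ℕ
  | .oracle => ↑g
  | .zero => pure 0
  | .succ => ↑Nat.succ
  | .left => ↑fun n : ℕ => n.unpair.1
  | .right => ↑fun n : ℕ => n.unpair.2
  | .pair a b => fun n => Nat.pair <$> a.eval g n <*> b.eval g n
  | .comp a b => fun n => b.eval g n >>= a.eval g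
  | .prec a b => Nat.unpaired fun x n =>
      n.rec (a.eval g x) fun y IH => do let i ← IH; b.eval g (Nat.pair x (Nat.pair y i))
  | .rfind a => fun x => Nat.rfind fun n => (fun m => m = 0) <$> a.eval g (Nat.pair x n)

theorem RecursiveIn.exists_code {g : ℕ → ℕ} {f : ℕ →. ℕ} (h : RecursiveIn g f) :
    ∃ c : Cd, c.eval g = f := by
  induction h with
  | oracle => exact ⟨.oracle, rfl⟩
  | zero => exact ⟨.zero, rfl⟩
  | succ => exact ⟨.succ, rfl⟩
  | left => exact ⟨.left, rfl⟩
  | right => exact ⟨.right, rfl⟩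
  | pair _ _ ih1 ih2 =>
    obtain ⟨c1, rfl⟩ := ih1; obtain ⟨c2, rfl⟩ := ih2; exact ⟨.pair c1 c2, rfl⟩
  | comp _ _ ih1 ih2 =>
    obtain ⟨c1, rfl⟩ := ih1; obtain ⟨c2, rfl⟩ := ih2; exact ⟨.comp c1 c2, rfl⟩
  | prec _ _ ih1 ih2 =>
    obtain ⟨c1, rfl⟩ := ih1; obtain ⟨c2, rfl⟩ := ih2; exact ⟨.prec c1 c2, rfl⟩
  | rfind _ ih =>
    obtain ⟨c1, rfl⟩ := ih; exact ⟨.rfind c1, rfl⟩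

def Cd.enc : Cd → ℕ
  | .oracle => Nat.pair 0 0
  | .zero => Nat.pair 1 0
  | .succ => Nat.pair 2 0
  | .left => Nat.pair 3 0
  | .right => Nat.pair 4 0
  | .pair a b => Nat.pair 5 (Nat.pair a.enc b.enc)
  | .comp a b => Nat.pair 6 (Nat.pair a.enc b.enc)
  | .prec a b => Nat.pair 7 (Nat.pair a.enc b.enc)
  | .rfind a => Nat.pair 8 a.enc

theorem Cd.enc_inj : Function.Injective Cd.enc := by
  intro c
  induction c with
  | oracle => intro d h; cases d <;> simp_all [Cd.enc, Nat.pair_eq_pair]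
  | zero => intro d h; cases d <;> simp_all [Cd.enc, Nat.pair_eq_pair]
  | succ => intro d h; cases d <;> simp_all [Cd.enc, Nat.pair_eq_pair]
  | left => intro d h; cases d <;> simp_all [Cd.enc, Nat.pair_eq_pair]
  | right => intro d h; cases d <;> simp_all [Cd.enc, Nat.pair_eq_pair]
  | pair a b iha ihb =>
    intro d h; cases d <;> simp only [Cd.enc, Nat.pair_eq_pair] at h <;> try omega
    rw [iha h.2.1, ihb h.2.2]
  | comp a b iha ihb =>
    intro d h; cases d <;> simp only [Cd.enc, Nat.pair_eq_pair] at h <;> try omega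
    rw [iha h.2.1, ihb h.2.2]
  | prec a b iha ihb =>
    intro d h; cases d <;> simp only [Cd.enc, Nat.pair_eq_pair] at h <;> try omega
    rw [iha h.2.1, ihb h.2.2]
  | rfind a iha =>
    intro d h; cases d <;> simp only [Cd.enc, Nat.pair_eq_pair] at h <;> try omega
    rw [iha h.2]

instance : Nonempty Cd := ⟨.zero⟩

instance : Countable Cd := ⟨⟨Cd.enc, Cd.enc_inj⟩⟩

noncomputable def cdEnum : ℕ → Cd := (exists_surjective_nat Cd).choose

theorem cdEnum_surj : Function.Surjective cdEnum := (exists_surjective_nat Cd).choose_spec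

private theorem exists_uniform_bound {Q : ℕ → ℕ → Prop}
    (mono : ∀ m k k', k ≤ k' → Q m k → Q m k') :
    ∀ x, (∀ m, m ≤ x → ∃ k, Q m k) → ∃ k, ∀ m, m ≤ x → Q m k := by
  intro x
  induction x with
  | zero =>
    intro h
    obtain ⟨k, hk⟩ := h 0 le_rfl
    exact ⟨k, fun m hm => by rw [Nat.le_zero.1 hm]; exact hk⟩
  | succ x ih =>
    intro h
    obtain ⟨k1, hk1⟩ := ih fun m hm => h m (hm.trans (Nat.le_succ x))
    obtain ⟨k2, hk2⟩ := h (x + 1) le_rfl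
    refine ⟨max k1 k2, fun m hm => ?_⟩
    rcases eq_or_lt_of_le hm with rfl | h'
    · exact mono _ _ _ (le_max_right _ _) hk2
    · exact mono _ _ _ (le_max_left _ _) (hk1 m (Nat.lt_succ_iff.1 h'))

private theorem mem_seq_pair {x y : Part ℕ} {a : ℕ} :
    a ∈ Nat.pair <$> x <*> y ↔ ∃ u ∈ x, ∃ v ∈ y, Nat.pair u v = a := by
  simp [Seq.seq, Part.bind_eq_bind, Part.mem_bind_iff, Part.mem_map_iff]

theorem Cd.eval_use {g : ℕ → ℕ} (c : Cd) :
    ∀ {n x : ℕ}, x ∈ c.eval g n → ∃ k, ∀ g' : ℕ → ℕ, (∀ i < k, g' i = g i) → x ∈ c.eval g' n := by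
  induction c with
  | oracle =>
    intro n x hx
    simp only [Cd.eval, PFun.coe_val, Part.mem_some_iff] at hx ⊢
    exact ⟨n + 1, fun g' hg' => by rw [hg' n (Nat.lt_succ_self n)]; exact hx⟩
  | zero => exact fun hx => ⟨0, fun g' _ => hx⟩
  | succ => exact fun hx => ⟨0, fun g' _ => hx⟩
  | left => exact fun hx => ⟨0, fun g' _ => hx⟩
  | right => exact fun hx => ⟨0, fun g' _ => hx⟩
  | pair a b iha ihb =>
    intro n x hx
    simp only [Cd.eval, mem_seq_pair] at hx ⊢
    obtain ⟨u, hu, v, hv, hx⟩ := hx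
    obtain ⟨k1, hk1⟩ := iha hu
    obtain ⟨k2, hk2⟩ := ihb hv
    refine ⟨max k1 k2, fun g' hg' => ?_⟩
    exact ⟨u, hk1 g' (fun i hi => hg' i (lt_of_lt_of_le hi (le_max_left _ _))),
      v, hk2 g' (fun i hi => hg' i (lt_of_lt_of_le hi (le_max_right _ _))), hx⟩
  | comp a b iha ihb =>
    intro n x hx
    simp only [Cd.eval] at hx ⊢
    obtain ⟨u, hu, hx⟩ := Part.mem_bind_iff.1 hx
    obtain ⟨k1, hk1⟩ := ihb hu
    obtain ⟨k2, hk2⟩ := iha hx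
    refine ⟨max k1 k2, fun g' hg' => ?_⟩
    exact Part.mem_bind_iff.2 ⟨u, hk1 g' (fun i hi => hg' i (lt_of_lt_of_le hi (le_max_left _ _))),
      hk2 g' (fun i hi => hg' i (lt_of_lt_of_le hi (le_max_right _ _)))⟩
  | prec a b iha ihb =>
    intro n x hx
    have H : ∀ (p m x : ℕ),
        x ∈ (m.rec (a.eval g p) (fun y IH => IH >>= fun i =>
            b.eval g (Nat.pair p (Nat.pair y i))) : Part ℕ) →
        ∃ k, ∀ g' : ℕ → ℕ, (∀ i < k, g' i = g i) →
          x ∈ (m.rec (a.eval g' p) (fun y IH => IH >>= fun i =>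
            b.eval g' (Nat.pair p (Nat.pair y i))) : Part ℕ) := by
      intro p m
      induction m with
      | zero => exact fun x hx => iha hx
      | succ m ihm =>
        intro x hx
        simp only [Part.bind_eq_bind, Part.mem_bind_iff] at hx
        obtain ⟨u, hu, hx⟩ := hx
        obtain ⟨k1, hk1⟩ := ihm u hu
        obtain ⟨k2, hk2⟩ := ihb hx
        refine ⟨max k1 k2, fun g' hg' => ?_⟩
        simp only [Part.bind_eq_bind, Part.mem_bind_iff]
        exact ⟨u, hk1 g' (fun i hi => hg' i (lt_of_lt_of_le hi (le_max_left _ _))),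
          hk2 g' (fun i hi => hg' i (lt_of_lt_of_le hi (le_max_right _ _)))⟩
    simp only [Cd.eval, Nat.unpaired] at hx ⊢
    exact H n.unpair.1 n.unpair.2 x hx
  | rfind a iha =>
    intro n x hx
    simp only [Cd.eval] at hx ⊢
    have hspec := Nat.rfind_spec hx
    have hmin := fun m (hm : m < x) => Nat.rfind_min hx hm
    have hex : ∀ m, m ≤ x → ∃ k, ∀ g' : ℕ → ℕ, (∀ i < k, g' i = g i) →
        Cd.eval g' a (Nat.pair n m) = Cd.eval g a (Nat.pair n m) := by
      intro m hm
      have hv : ∃ v, v ∈ a.eval g (Nat.pair n m) := by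
        rcases eq_or_lt_of_le hm with rfl | hm'
        · have hs := hspec
          simp only [Part.map_eq_map, Part.mem_map_iff] at hs
          obtain ⟨v, hv, -⟩ := hs; exact ⟨v, hv⟩
        · have hs := hmin m hm'
          simp only [Part.map_eq_map, Part.mem_map_iff] at hs
          obtain ⟨v, hv, -⟩ := hs; exact ⟨v, hv⟩
      obtain ⟨v, hv⟩ := hv
      obtain ⟨k, hk⟩ := iha hv
      exact ⟨k, fun g' hg' => by
        rw [Part.eq_some_iff.2 (hk g' hg'), Part.eq_some_iff.2 hv]⟩
    obtain ⟨k, hk⟩ := exists_uniform_bound (fun m k k' hle h g' hg' =>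
      h g' (fun i hi => hg' i (lt_of_lt_of_le hi hle))) x hex
    refine ⟨k, fun g' hg' => Nat.mem_rfind.2 ⟨?_, fun {m} hm => ?_⟩⟩
    · simpa only [hk x le_rfl g' hg'] using hspec
    · simpa only [hk m hm.le g' hg'] using hmin m hm

def Ext (σ : List Bool) (A : ℕ → Bool) : Prop := ∀ i, i < σ.length → A i = σ.getD i false

def extZ (σ : List Bool) : ℕ → Bool := fun i => σ.getD i false

theorem ext_extZ (σ : List Bool) : Ext σ (extZ σ) := fun _ _ => rfl

theorem Ext.mono {σ σ' : List Bool} {A : ℕ → Bool} (h : Ext σ' A) (hp : σ <+: σ') : Ext σ A := by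
  intro i hi
  obtain ⟨t, rfl⟩ := hp
  rw [h i (lt_of_lt_of_le hi (by simp)), List.getD_append _ _ _ _ hi]

def Kills (c : Cd) (σ τ : List Bool) : Prop :=
  ∀ A B : ℕ → Bool, Ext σ A → Ext τ B →
    ∃ n, Cd.eval (ofBool B) c n ≠ Part.some (ofBool A n)

theorem Kills.mono {c : Cd} {σ τ σ' τ' : List Bool} (h : Kills c σ τ)
    (hσ : σ <+: σ') (hτ : τ <+: τ') : Kills c σ' τ' :=
  fun A B hA hB => h A B (hA.mono hσ) (hB.mono hτ)

theorem attack (c : Cd) (σ τ : List Bool) :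
    ∃ σ' τ', σ <+: σ' ∧ τ <+: τ' ∧ Kills c σ' τ' := by
  by_cases H : ∃ ρ : List Bool, τ <+: ρ ∧ (Cd.eval (ofBool (extZ ρ)) c σ.length).Dom
  · obtain ⟨ρ, hρ, hdom⟩ := H
    obtain ⟨m, hmem⟩ := Part.dom_iff_mem.1 hdom
    obtain ⟨k, hk⟩ := Cd.eval_use c hmem
    refine ⟨σ ++ [decide (m = 0)], ρ ++ List.replicate k false,
      ⟨[decide (m = 0)], rfl⟩, hρ.trans ⟨List.replicate k false, rfl⟩, ?_⟩
    intro A B hA hB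
    refine ⟨σ.length, ?_⟩
    have hBor : ∀ i, i < k → ofBool B i = ofBool (extZ ρ) i := by
      intro i hi
      have hilen : i < (ρ ++ List.replicate k false).length := by
        simp only [List.length_append, List.length_replicate]; omega
      have hBi := hB i hilen
      unfold ofBool extZ
      rcases lt_or_ge i ρ.length with h' | h'
      · rw [hBi, List.getD_append _ _ _ _ h']
      · rw [hBi, List.getD_append_right _ _ _ _ h', List.getD_eq_default _ _ h',
          List.getD_eq_getElem _ _ (by simp [List.length_replicate]; omega)]
        simp
    have hBval : m ∈ Cd.eval (ofBool B) c σ.length := hk (ofBool B) hBor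
    rw [Part.eq_some_iff.2 hBval]
    have hAval : A σ.length = decide (m = 0) := by
      have := hA σ.length (by simp)
      rwa [List.getD_append_right _ _ _ _ le_rfl, Nat.sub_self] at this
    simp only [ofBool, hAval, ne_eq, Part.some_inj]
    by_cases hm : m = 0 <;> simp [hm]
  · refine ⟨σ, τ, List.prefix_refl _, List.prefix_refl _, ?_⟩
    intro A B hA hB
    refine ⟨σ.length, fun heq => H ?_⟩
    have hmem : ofBool A σ.length ∈ Cd.eval (ofBool B) c σ.length := by
      rw [heq]; exact Part.mem_some _
    obtain ⟨k, hk⟩ := Cd.eval_use c hmem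
    set ρ : List Bool := List.ofFn (fun i : Fin (max k τ.length) => B i) with hρdef
    have hρlen : ρ.length = max k τ.length := by simp [hρdef]
    have hρget : ∀ i, i < ρ.length → ρ.getD i false = B i := by
      intro i hi
      rw [List.getD_eq_getElem _ _ hi]
      exact List.getElem_ofFn (by simpa [hρdef] using hi)
    refine ⟨ρ, ?_, ?_⟩
    · rw [List.prefix_iff_eq_take]
      apply List.ext_getElem
      · rw [List.length_take, hρlen]; omega
      · intro i h1 h2
        rw [List.getElem_take]
        have h3 : i < ρ.length := by rw [hρlen]; omega
        have h4 := hρget i h3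
        rw [List.getD_eq_getElem _ _ h3] at h4
        rw [h4, hB i h1, List.getD_eq_getElem _ _ h1]
    · apply Part.dom_iff_mem.2
      refine ⟨ofBool A σ.length, hk _ ?_⟩
      intro i hi
      have h3 : i < ρ.length := by rw [hρlen]; omega
      unfold ofBool extZ
      rw [hρget i h3]

theorem attack_list (c : Cd) {ι : Type} [DecidableEq ι] :
    ∀ (l : List (ι × ι)) (ν : ι → List Bool),
      ∃ ν' : ι → List Bool, (∀ i, ν i <+: ν' i) ∧
        ∀ p ∈ l, p.1 ≠ p.2 → Kills c (ν' p.1) (ν' p.2) := by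
  intro l
  induction l with
  | nil => exact fun ν => ⟨ν, fun _ => List.prefix_refl _, by simp⟩
  | cons p l ih =>
    intro ν
    by_cases hp : p.1 = p.2
    · obtain ⟨ν', h1, h2⟩ := ih ν
      refine ⟨ν', h1, ?_⟩
      intro q hq hne
      rcases List.mem_cons.1 hq with rfl | hq
      · exact absurd hp hne
      · exact h2 q hq hne
    · obtain ⟨σ', τ', hσ, hτ, hkill⟩ := attack c (ν p.1) (ν p.2)
      set ν₁ : ι → List Bool := Function.update (Function.update ν p.1 σ') p.2 τ' with hν₁
      have hup1 : ν₁ p.1 = σ' := by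
        rw [hν₁, Function.update_of_ne hp, Function.update_self]
      have hup2 : ν₁ p.2 = τ' := by rw [hν₁, Function.update_self]
      have hpre1 : ∀ i, ν i <+: ν₁ i := by
        intro i
        by_cases h2 : i = p.2
        · subst h2; rw [hup2]; exact hτ
        · by_cases h1 : i = p.1
          · subst h1; rw [hup1]; exact hσ
          · rw [hν₁, Function.update_of_ne h2, Function.update_of_ne h1]
      obtain ⟨ν', h1, h2⟩ := ih ν₁
      refine ⟨ν', fun i => (hpre1 i).trans (h1 i), ?_⟩
      intro q hq hne
      rcases List.mem_cons.1 hq with rfl | hq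
      · exact hkill.mono (hup1 ▸ h1 q.1) (hup2 ▸ h1 q.2)
      · exact h2 q hq hne

theorem prefix_getD {σ σ' : List Bool} (h : σ <+: σ') {i : ℕ} (hi : i < σ.length) :
    σ'.getD i false = σ.getD i false := by
  obtain ⟨t, rfl⟩ := h
  exact List.getD_append _ _ _ _ hi

def Diff (σ τ : List Bool) : Prop :=
  ∃ p, p < σ.length ∧ p < τ.length ∧ σ.getD p false ≠ τ.getD p false

theorem Diff.mono {σ τ σ' τ' : List Bool} (h : Diff σ τ) (hσ : σ <+: σ') (hτ : τ <+: τ') :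
    Diff σ' τ' := by
  obtain ⟨p, h1, h2, h3⟩ := h
  exact ⟨p, lt_of_lt_of_le h1 hσ.length_le, lt_of_lt_of_le h2 hτ.length_le,
    by rwa [prefix_getD hσ h1, prefix_getD hτ h2]⟩

def Pinv (s : ℕ) (ν : (ℕ → Bool) → List Bool) : Prop :=
  (∀ X Y, (∀ i, i < s → X i = Y i) → ν X = ν Y) ∧
  (∀ X, s ≤ (ν X).length) ∧
  (∀ X Y, (∃ i, i < s ∧ X i ≠ Y i) → Diff (ν X) (ν Y))

theorem step (c : Cd) (s : ℕ) (ν : (ℕ → Bool) → List Bool) (hP : Pinv s ν) :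
    ∃ ν', Pinv (s+1) ν' ∧ (∀ X, ν X <+: ν' X) ∧
      (∀ X Y, (∃ i, i < s+1 ∧ X i ≠ Y i) → Kills c (ν' X) (ν' Y)) := by
  obtain ⟨hPa, hPb, hPc⟩ := hP
  set ν₁ : (ℕ → Bool) → List Bool := fun X => ν X ++ [X s] with hν₁
  have hν₁agree : ∀ X Y : ℕ → Bool, (∀ i, i < s + 1 → X i = Y i) → ν₁ X = ν₁ Y := by
    intro X Y h
    rw [hν₁]
    simp only
    rw [hPa X Y (fun i hi => h i (Nat.lt_succ_of_lt hi)), h s (Nat.lt_succ_self s)]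
  have hν₁pre : ∀ X, ν X <+: ν₁ X := fun X => ⟨[X s], rfl⟩
  set rep : (Fin (s+1) → Bool) → (ℕ → Bool) :=
    fun v i => if h : i < s + 1 then v ⟨i, h⟩ else false with hrep
  set trunc : (ℕ → Bool) → (Fin (s+1) → Bool) := fun X i => X i.val with htrunc
  have hrt : ∀ X : ℕ → Bool, ∀ i, i < s + 1 → rep (trunc X) i = X i := by
    intro X i hi
    rw [hrep, htrunc]
    simp [hi]
  obtain ⟨μ', hpre, hkills⟩ := attack_list c
    ((Finset.univ ×ˢ Finset.univ : Finset ((Fin (s+1) → Bool) × (Fin (s+1) → Bool))).toList)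
    (fun v => ν₁ (rep v))
  have hmain : ∀ X : ℕ → Bool, ν₁ X <+: μ' (trunc X) := by
    intro X
    rw [← hν₁agree (rep (trunc X)) X (hrt X)]
    exact hpre (trunc X)
  refine ⟨fun X => μ' (trunc X), ⟨?_, ?_, ?_⟩, ?_, ?_⟩
  · intro X Y h
    have h2 : trunc X = trunc Y := funext fun i => by rw [htrunc]; exact h i.val i.isLt
    show μ' (trunc X) = μ' (trunc Y)
    rw [h2]
  · intro X
    have h1 : s + 1 ≤ (ν₁ X).length := by
      rw [hν₁]; simp only [List.length_append, List.length_cons, List.length_nil]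
      have := hPb X; omega
    exact h1.trans (hmain X).length_le
  · intro X Y ⟨i, hi, hne⟩
    have hD : Diff (ν₁ X) (ν₁ Y) := by
      by_cases hsep : ∃ j, j < s ∧ X j ≠ Y j
      · exact (hPc X Y hsep).mono (hν₁pre X) (hν₁pre Y)
      · push_neg at hsep
        have his : i = s := by
          rcases Nat.lt_succ_iff_lt_or_eq.1 hi with h' | h'
          · exact absurd (hsep i h') hne
          · exact h'
        subst his
        have hXY : ν X = ν Y := hPa X Y hsep
        refine ⟨(ν X).length, ?_, ?_, ?_⟩
        · rw [hν₁]; simp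
        · rw [hν₁, hXY]; simp
        · rw [hν₁]
          simp only
          rw [List.getD_append_right _ _ _ _ le_rfl, Nat.sub_self]
          conv_rhs => rw [hXY]
          rw [List.getD_append_right _ _ _ _ le_rfl, Nat.sub_self]
          simpa using hne
    exact hD.mono (hmain X) (hmain Y)
  · exact fun X => (hν₁pre X).trans (hmain X)
  · intro X Y ⟨i, hi, hne⟩
    have htne : trunc X ≠ trunc Y := by
      intro h
      exact hne (by simpa [htrunc] using congrFun h ⟨i, hi⟩)
    exact hkills (trunc X, trunc Y)
      (by simp [Finset.mem_toList]) htne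

noncomputable def tower (c : ℕ → Cd) : (s : ℕ) → {ν : (ℕ → Bool) → List Bool // Pinv s ν}
  | 0 => ⟨fun _ => [], fun _ _ _ => rfl, fun _ => Nat.zero_le _,
      fun _ _ h => absurd h.choose_spec.1 (Nat.not_lt_zero _)⟩
  | s + 1 => ⟨Classical.choose (step (c s) s (tower c s).1 (tower c s).2),
      (Classical.choose_spec (step (c s) s (tower c s).1 (tower c s).2)).1⟩

theorem tower_succ_prefix (c : ℕ → Cd) (s : ℕ) (X : ℕ → Bool) :
    (tower c s).1 X <+: (tower c (s+1)).1 X :=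
  (Classical.choose_spec (step (c s) s (tower c s).1 (tower c s).2)).2.1 X

theorem tower_kills (c : ℕ → Cd) (s : ℕ) (X Y : ℕ → Bool)
    (h : ∃ i, i < s + 1 ∧ X i ≠ Y i) :
    Kills (c s) ((tower c (s+1)).1 X) ((tower c (s+1)).1 Y) :=
  (Classical.choose_spec (step (c s) s (tower c s).1 (tower c s).2)).2.2 X Y h

theorem tower_prefix (c : ℕ → Cd) {s t : ℕ} (h : s ≤ t) (X : ℕ → Bool) :
    (tower c s).1 X <+: (tower c t).1 X := by
  induction t, h using Nat.le_induction with
  | base => exact List.prefix_refl _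
  | succ t ht ih => exact ih.trans (tower_succ_prefix c t X)

noncomputable def branch (c : ℕ → Cd) (X : ℕ → Bool) : ℕ → Bool :=
  fun n => ((tower c (n+1)).1 X).getD n false

theorem branch_ext (c : ℕ → Cd) (X : ℕ → Bool) (s : ℕ) :
    Ext ((tower c s).1 X) (branch c X) := by
  intro i hi
  have hlen : i < ((tower c (i+1)).1 X).length :=
    lt_of_lt_of_le (Nat.lt_succ_self i) ((tower c (i+1)).2.2.1 X)
  unfold branch
  rcases le_total s (i+1) with h | h
  · rw [← prefix_getD (tower_prefix c h X) hi]
  · rw [← prefix_getD (tower_prefix c h X) hlen]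

theorem branch_incomp (c : ℕ → Cd) (hc : ∀ d : Cd, ∀ N : ℕ, ∃ s, N ≤ s ∧ c s = d)
    (X Y : ℕ → Bool) (hXY : X ≠ Y) (d : Cd) :
    ∃ n, Cd.eval (ofBool (branch c Y)) d n ≠ Part.some (ofBool (branch c X) n) := by
  obtain ⟨i, hi⟩ := Function.ne_iff.1 hXY
  obtain ⟨s, his, rfl⟩ := hc d i
  exact tower_kills c s X Y ⟨i, by omega, hi⟩ (branch c X) (branch c Y)
    (branch_ext c X (s+1)) (branch_ext c Y (s+1))

noncomputable def sched : ℕ → Cd := fun s => cdEnum (Nat.unpair s).1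

theorem sched_cofinal : ∀ d : Cd, ∀ N : ℕ, ∃ s, N ≤ s ∧ sched s = d := by
  intro d N
  obtain ⟨e, he⟩ := cdEnum_surj d
  exact ⟨Nat.pair e N, Nat.right_le_pair e N, by simp [sched, Nat.unpair_pair, he]⟩

/-- A continuum-sized family of pairwise Turing-incomparable functions. -/
noncomputable def AC (X : ℕ → Bool) : ℕ → ℕ := ofBool (branch sched X)

theorem AC_not_le {X Y : ℕ → Bool} (h : X ≠ Y) : ¬ TuringLe (AC X) (AC Y) := by
  intro hle
  obtain ⟨d, hd⟩ := RecursiveIn.exists_code hle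
  obtain ⟨n, hn⟩ := branch_incomp sched sched_cofinal X Y h d
  apply hn
  have hd' : Cd.eval (ofBool (branch sched Y)) d = ((AC X : ℕ → ℕ) : ℕ →. ℕ) := hd
  rw [hd']
  rfl

theorem TuringLe.refl (f : ℕ → ℕ) : TuringLe f f := RecursiveIn.oracle

theorem RecursiveIn.of_partrec {f : ℕ →. ℕ} (hf : Nat.Partrec f) (g : ℕ → ℕ) :
    RecursiveIn g f := by
  induction hf with
  | zero => exact .zero
  | succ => exact .succ
  | left => exact .left
  | right => exact .right
  | pair _ _ ih1 ih2 => exact .pair ih1 ih2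
  | comp _ _ ih1 ih2 => exact .comp ih1 ih2
  | prec _ _ ih1 ih2 => exact .prec ih1 ih2
  | rfind _ ih => exact .rfind ih

theorem RecursiveIn.trans' {f : ℕ →. ℕ} {g h : ℕ → ℕ}
    (hf : RecursiveIn g f) (hg : RecursiveIn h ↑g) : RecursiveIn h f := by
  induction hf with
  | oracle => exact hg
  | zero => exact .zero
  | succ => exact .succ
  | left => exact .left
  | right => exact .right
  | pair _ _ ih1 ih2 => exact .pair ih1 ih2
  | comp _ _ ih1 ih2 => exact .comp ih1 ih2
  | prec _ _ ih1 ih2 => exact .prec ih1 ih2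
  | rfind _ ih => exact .rfind ih

theorem TuringLe.trans {f g h : ℕ → ℕ} (h1 : TuringLe f g) (h2 : TuringLe g h) :
    TuringLe f h := RecursiveIn.trans' h1 h2

theorem comp_oracle_le (g : ℕ → ℕ) (u : ℕ → ℕ) (hu : Nat.Partrec ↑u) :
    RecursiveIn g ↑(fun n => g (u n)) := by
  have h := RecursiveIn.comp (@RecursiveIn.oracle g) (RecursiveIn.of_partrec hu g)
  have heq : (fun n => (↑u : ℕ →. ℕ) n >>= (↑g : ℕ →. ℕ)) = ((fun n => g (u n) : ℕ → ℕ) : ℕ →. ℕ) := by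
    funext n
    change Part.bind _ _ = _
    exact Part.bind_some (u n) (fun a => Part.some (g a))
  rwa [heq] at h

theorem turingLe_join_left (f g : ℕ → ℕ) : TuringLe f (join f g) := by
  have hu : Nat.Partrec ↑(fun n : ℕ => 2 * n) :=
    Nat.Partrec.of_primrec (Primrec.nat_iff.1
      (Primrec.nat_mul.comp (Primrec.const 2) Primrec.id))
  have h := comp_oracle_le (join f g) _ hu
  have heq : (fun n => join f g (2 * n)) = f := by
    funext n
    unfold join
    have h1 : 2 * n % 2 = 0 := by omega
    have h2 : 2 * n / 2 = n := by omega
    rw [h1, h2]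
    simp
  unfold TuringLe
  rwa [heq] at h

theorem turingLe_join_right (f g : ℕ → ℕ) : TuringLe g (join f g) := by
  have hu : Nat.Partrec ↑(fun n : ℕ => 2 * n + 1) :=
    Nat.Partrec.of_primrec (Primrec.nat_iff.1
      ((Primrec.nat_add.comp (Primrec.nat_mul.comp (Primrec.const 2) Primrec.id)
        (Primrec.const 1))))
  have h := comp_oracle_le (join f g) _ hu
  have heq : (fun n => join f g (2 * n + 1)) = g := by
    funext n
    unfold join
    have h1 : (2 * n + 1) % 2 = 1 := by omega
    have h2 : (2 * n + 1) / 2 = n := by omega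
    rw [h1, h2]
    simp
  unfold TuringLe
  rwa [heq] at h

theorem turingLe_join_self (f : ℕ → ℕ) : TuringLe (join f f) f := by
  have hu : Nat.Partrec ↑(fun n : ℕ => n / 2) :=
    Nat.Partrec.of_primrec (Primrec.nat_iff.1
      (Primrec.nat_div.comp Primrec.id (Primrec.const 2)))
  have h := comp_oracle_le f _ hu
  have heq : (fun n => f (n / 2)) = join f f := by
    funext n
    unfold join
    by_cases h2 : n % 2 = 0 <;> simp [h2]
  unfold TuringLe
  rwa [heq] at h

/-- The mass problem associated to `I ⊆ 2^ω`. -/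
noncomputable def FF (I : Set (ℕ → Bool)) : Set (ℕ → ℕ) :=
  {f | (∃ X ∈ I, TuringEquiv f (AC X)) ∨ (∃ X : ℕ → Bool, TuringLt (AC X) f)}

theorem AC_mem_FF {I : Set (ℕ → Bool)} {X : ℕ → Bool} (hX : X ∈ I) : AC X ∈ FF I :=
  Or.inl ⟨X, hX, TuringLe.refl _, TuringLe.refl _⟩

theorem FF_mono {I J : Set (ℕ → Bool)} (h : I ⊆ J) : FF I ⊆ FF J := by
  rintro f (⟨X, hX, he⟩ | ht)
  · exact Or.inl ⟨X, h hX, he⟩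
  · exact Or.inr ht

theorem FF_upward {I : Set (ℕ → Bool)} {f f' : ℕ → ℕ} (hf : f ∈ FF I)
    (hle : TuringLe f f') : f' ∈ FF I := by
  rcases hf with ⟨X, hX, hle1, hle2⟩ | ⟨X, hle1, hnle⟩
  · by_cases h : TuringLe f' (AC X)
    · exact Or.inl ⟨X, hX, h, hle2.trans hle⟩
    · exact Or.inr ⟨X, hle2.trans hle, h⟩
  · refine Or.inr ⟨X, hle1.trans hle, fun h => hnle (hle.trans h)⟩

theorem AC_eq_of_le {X Y : ℕ → Bool} (h : TuringLe (AC X) (AC Y)) : X = Y := by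
  by_contra hne
  exact AC_not_le hne h

theorem FF_mem_inter {I J : Set (ℕ → Bool)} {f : ℕ → ℕ} (hI : f ∈ FF I) (hJ : f ∈ FF J) :
    f ∈ FF (I ∩ J) := by
  rcases hI with ⟨X, hX, hle1, hle2⟩ | ht
  · rcases hJ with ⟨Y, hY, hle1', hle2'⟩ | ht'
    · have : X = Y := AC_eq_of_le (hle2.trans hle1')
      subst this
      exact Or.inl ⟨X, ⟨hX, hY⟩, hle1, hle2⟩
    · exact Or.inr ht'
  · exact Or.inr ht

theorem FF_union (I J : Set (ℕ → Bool)) : FF (I ∪ J) = FF I ∪ FF J := by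
  ext f
  constructor
  · rintro (⟨X, hX | hX, he⟩ | ht)
    · exact Or.inl (Or.inl ⟨X, hX, he⟩)
    · exact Or.inr (Or.inl ⟨X, hX, he⟩)
    · exact Or.inl (Or.inr ht)
  · rintro (h | h)
    · exact FF_mono Set.subset_union_left h
    · exact FF_mono Set.subset_union_right h

theorem muchnikLe_of_subset {A B : Set (ℕ → ℕ)} (h : B ⊆ A) : MuchnikLe A B :=
  fun f hf => ⟨f, h hf, TuringLe.refl f⟩

end Antichain

/-- The dual of the Boolean algebra `𝒫(2^ω)` embeds into the Muchnik lattice as a Boolean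
algebra: there is a map `F` from subsets of `2^ω` to mass problems that is order-reversing
and injective on the order, sends intersections to joins `+`, and unions to meets `∪`. -/
theorem embed_dual_powerset_muchnik :
    ∃ F : Set (ℕ → Bool) → Set (ℕ → ℕ),
      (∀ I J : Set (ℕ → Bool), I ⊆ J → MuchnikLe (F J) (F I)) ∧
      (∀ I J : Set (ℕ → Bool), I ⊂ J → ¬ MuchnikLe (F I) (F J)) ∧
      (∀ I J : Set (ℕ → Bool), MuchnikEquiv (F (I ∩ J)) (joinSet (F I) (F J))) ∧
      (∀ I J : Set (ℕ → Bool), MuchnikEquiv (F (I ∪ J)) (F I ∪ F J)) := by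
  refine ⟨FF, ?_, ?_, ?_, ?_⟩
  · exact fun I J h => muchnikLe_of_subset (FF_mono h)
  · intro I J hIJ hle
    obtain ⟨X, hXJ, hXI⟩ := Set.exists_of_ssubset hIJ
    obtain ⟨g, hg, hgle⟩ := hle (AC X) (AC_mem_FF hXJ)
    rcases hg with ⟨Y, hY, hle1, hle2⟩ | ⟨Y, hle1, hnle⟩
    · have : Y = X := AC_eq_of_le (hle2.trans hgle)
      subst this
      exact hXI hY
    · have : Y = X := AC_eq_of_le (hle1.trans hgle)
      subst this
      exact hnle hgle
  · intro I J
    constructor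
    · rintro h ⟨a, ha, b, hb, rfl⟩
      refine ⟨join a b, ?_, TuringLe.refl _⟩
      exact FF_mem_inter (FF_upward ha (turingLe_join_left a b))
        (FF_upward hb (turingLe_join_right a b))
    · intro f hf
      exact ⟨join f f, ⟨f, FF_mono Set.inter_subset_left hf,
        f, FF_mono Set.inter_subset_right hf, rfl⟩, turingLe_join_self f⟩
  · intro I J
    rw [FF_union]
    exact ⟨muchnikLe_of_subset (fun f h => h), muchnikLe_of_subset (fun f h => h)⟩


end Muchnik
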